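/- In the KL-control setting (fixed-point/consistency condition): for every initial probability vector P_0, the policy Q* attains the minimum over all admissible policies {Q_t}_{t=0}^{T−1} (with induced distributions P_{t+1}^j = Σ_i P_t^i Q_t^{ij}) of the functional Σ_{t=0}^{T−1} Σ_{i,j} P_t^i Q_t^{ij} ( C_t^{ij} + α·log(Q*_t^{ij}/R_t^{ij}) ), i.e., Q* is a minimizer of the optimal-control problem in which the logarithmic term is held fixed at Q* itself. -/

import Mathlib

/-!
STATEMENT 4 (fixed-point/consistency condition): In the KL-control setting, for every
initial probability vector `P_0`, the policy `Q*` attains the minimum over all admissible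
policies of `Σ_t Σ_{i,j} P_t^i Q_t^{ij} (C_t^{ij} + α log(Q*_t^{ij}/R_t^{ij}))`, i.e. `Q*`
minimizes the optimal-control problem with the logarithmic term held fixed at `Q*` itself.
-/

theorem stmt_4
    (V T : ℕ) (hV : 1 ≤ V) (hT : 1 ≤ T)
    (α : ℝ) (hα : 0 < α)
    (C R : ℕ → Fin V → Fin V → ℝ)
    (hRpos : ∀ t, t < T → ∀ i j, 0 < R t i j)
    (hRsum : ∀ t, t < T → ∀ i, ∑ j, R t i j = 1)
    (φ : ℕ → Fin V → ℝ)
    (hφT : ∀ i, φ T i = 1)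
    (hφ : ∀ t, t < T → ∀ i,
      φ t i = ∑ j, R t i j * Real.exp (-(C t i j) / α) * φ (t + 1) j)
    (Qstar : ℕ → Fin V → Fin V → ℝ)
    (hQstar : ∀ t, t < T → ∀ i j,
      Qstar t i j = φ (t + 1) j / φ t i * R t i j * Real.exp (-(C t i j) / α))
    (P0 : Fin V → ℝ) (hP0 : ∀ i, 0 ≤ P0 i) (hP0sum : ∑ i, P0 i = 1)
    (Pstar : ℕ → Fin V → ℝ) (hPstar0 : Pstar 0 = P0)
    (hPstar : ∀ t, t < T → ∀ j, Pstar (t + 1) j = ∑ i, Pstar t i * Qstar t i j) :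
    ∀ (Q : ℕ → Fin V → Fin V → ℝ) (P : ℕ → Fin V → ℝ),
      (∀ t, t < T → ∀ i j, 0 ≤ Q t i j) →
      (∀ t, t < T → ∀ i, ∑ j, Q t i j = 1) →
      P 0 = P0 →
      (∀ t, t < T → ∀ j, P (t + 1) j = ∑ i, P t i * Q t i j) →
      ∑ t ∈ Finset.range T, ∑ i, ∑ j,
          Pstar t i * Qstar t i j * (C t i j + α * Real.log (Qstar t i j / R t i j))
        ≤ ∑ t ∈ Finset.range T, ∑ i, ∑ j,
            P t i * Q t i j * (C t i j + α * Real.log (Qstar t i j / R t i j)) := by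
  -- positivity of φ
  have hφpos : ∀ t, t ≤ T → ∀ i, 0 < φ t i := by
    have key : ∀ k t, t ≤ T → T - t ≤ k → ∀ i, 0 < φ t i := by
      intro k
      induction k with
      | zero =>
        intro t ht hk i
        have : t = T := by omega
        simp [this, hφT]
      | succ k ih =>
        intro t ht hk i
        rcases eq_or_lt_of_le ht with h | h
        · simp [h, hφT]
        · rw [hφ t h i]
          apply Finset.sum_pos
          · intro j _
            exact mul_pos (mul_pos (hRpos t h i j) (Real.exp_pos _))
              (ih (t + 1) (by omega) (by omega) j)
          · exact ⟨⟨0, hV⟩, Finset.mem_univ _⟩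
    exact fun t ht => key (T - t) t ht le_rfl
  -- cost rewrite
  have hcost : ∀ t, t < T → ∀ i j,
      C t i j + α * Real.log (Qstar t i j / R t i j)
        = α * (Real.log (φ (t + 1) j) - Real.log (φ t i)) := by
    intro t ht i j
    have h1 : 0 < φ t i := hφpos t ht.le i
    have h2 : 0 < φ (t + 1) j := hφpos (t + 1) ht j
    have hR := hRpos t ht i j
    have harg : Qstar t i j / R t i j
        = φ (t + 1) j / φ t i * Real.exp (-(C t i j) / α) := by
      rw [hQstar t ht i j]; field_simp
    rw [harg, Real.log_mul (by positivity) (Real.exp_ne_zero _),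
      Real.log_div h2.ne' h1.ne', Real.log_exp]
    field_simp
    ring
  -- main lemma: the value of the functional is the same for every admissible policy
  have main : ∀ (Q : ℕ → Fin V → Fin V → ℝ) (P : ℕ → Fin V → ℝ),
      (∀ t, t < T → ∀ i j, 0 ≤ Q t i j) →
      (∀ t, t < T → ∀ i, ∑ j, Q t i j = 1) →
      P 0 = P0 →
      (∀ t, t < T → ∀ j, P (t + 1) j = ∑ i, P t i * Q t i j) →
      ∑ t ∈ Finset.range T, ∑ i, ∑ j,
          P t i * Q t i j * (C t i j + α * Real.log (Qstar t i j / R t i j))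
        = - (α * ∑ i, P0 i * Real.log (φ 0 i)) := by
    intro Q P hQnn hQ1 hP0' hPQ
    have step : ∀ t ∈ Finset.range T,
        (∑ i, ∑ j, P t i * Q t i j * (C t i j + α * Real.log (Qstar t i j / R t i j)))
          = (α * ∑ j, P (t + 1) j * Real.log (φ (t + 1) j))
            - (α * ∑ i, P t i * Real.log (φ t i)) := by
      intro t ht'
      have ht := Finset.mem_range.mp ht'
      have e1 : ∀ i j, P t i * Q t i j * (C t i j + α * Real.log (Qstar t i j / R t i j))
          = α * (P t i * Q t i j * Real.log (φ (t + 1) j))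
            - α * (P t i * Real.log (φ t i) * Q t i j) := by
        intro i j
        rw [hcost t ht i j]; ring
      simp only [e1, Finset.sum_sub_distrib, ← Finset.mul_sum]
      congr 1
      · congr 1
        rw [Finset.sum_comm]
        refine Finset.sum_congr rfl fun j _ => ?_
        rw [hPQ t ht j, Finset.sum_mul]
      · congr 1
        refine Finset.sum_congr rfl fun i _ => ?_
        rw [hQ1 t ht i, mul_one]
    rw [Finset.sum_congr rfl step, Finset.sum_range_sub
      (fun t => α * ∑ i, P t i * Real.log (φ t i))]
    simp [hφT, hP0']
  -- Qstar is admissible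
  have hQsnn : ∀ t, t < T → ∀ i j, 0 ≤ Qstar t i j := by
    intro t ht i j
    rw [hQstar t ht i j]
    exact le_of_lt (mul_pos (mul_pos (div_pos (hφpos (t + 1) ht j) (hφpos t ht.le i))
      (hRpos t ht i j)) (Real.exp_pos _))
  have hQs1 : ∀ t, t < T → ∀ i, ∑ j, Qstar t i j = 1 := by
    intro t ht i
    have h1 : 0 < φ t i := hφpos t ht.le i
    have : ∑ j, Qstar t i j
        = (∑ j, R t i j * Real.exp (-(C t i j) / α) * φ (t + 1) j) / φ t i := by
      rw [Finset.sum_div]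
      refine Finset.sum_congr rfl fun j _ => ?_
      rw [hQstar t ht i j]; field_simp
    rw [this, ← hφ t ht i, div_self h1.ne']
  intro Q P hQnn hQ1 hP0' hPQ
  rw [main Qstar Pstar hQsnn hQs1 hPstar0 hPstar, main Q P hQnn hQ1 hP0' hPQ]
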